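/- If two distinct leaves of a MUL-tree T carry the same label and are attached to the same pendant node (i.e., they have a common neighbor), then deleting one of them (suppressing the resulting degree-2 node if one arises) yields a tree with the same information content as T; in particular, each such leaf is prunable. -/

import Mathlib

open SimpleGraph

variable {V V' L L' : Type}

/-- Degree of a vertex, via `Set.ncard` of the neighbor set (no instances needed). -/
noncomputable def deg (G : SimpleGraph V) (v : V) : ℕ := (G.neighborSet v).ncard

/-- A leaf is a vertex of degree one. -/
def IsLeaf (G : SimpleGraph V) (v : V) : Prop := deg G v = 1

/-- The vertex set of the subtree `T_u^{uv}`: vertices reachable from `u`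
after deleting the edge `(u,v)`. -/
def side (G : SimpleGraph V) (u v : V) : Set V :=
  {w | (G.deleteEdges {s(u, v)}).Reachable w u}

/-- Labels appearing on leaves of the `u`-side of the edge `(u,v)`. -/
def sideLabels (G : SimpleGraph V) (ψ : V → L) (u v : V) : Set L :=
  {m | ∃ w, IsLeaf G w ∧ w ∈ side G u v ∧ ψ w = m}

/-- `M_u^{uv}`: labels appearing on leaves of `T_u^{uv}` but not of `T_v^{uv}`. -/
def Mside (G : SimpleGraph V) (ψ : V → L) (u v : V) : Set L :=
  sideLabels G ψ u v \ sideLabels G ψ v u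

/-- `C^{uv}`: labels appearing on leaves of both sides of the edge `(u,v)`. -/
def Cside (G : SimpleGraph V) (ψ : V → L) (u v : V) : Set L :=
  sideLabels G ψ u v ∩ sideLabels G ψ v u

/-- A quartet `ab|cd`: an unordered pair of unordered pairs of labels. -/
abbrev Quartet (L : Type) := Sym2 (Sym2 L)

/-- The edge `(u,v)` resolves the quartet `q = ab|cd` when `{a,b} ⊆ M_u^{uv}` and
`{c,d} ⊆ M_v^{uv}` (with `a,b,c,d` four distinct labels). -/
def Resolves (G : SimpleGraph V) (ψ : V → L) (u v : V) (q : Quartet L) : Prop :=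
  G.Adj u v ∧ ∃ a b c d : L, a ≠ b ∧ c ≠ d ∧
    a ∈ Mside G ψ u v ∧ b ∈ Mside G ψ u v ∧
    c ∈ Mside G ψ v u ∧ d ∈ Mside G ψ v u ∧
    q = s(s(a, b), s(c, d))

/-- `Δ(u,v)`: the set of quartets resolved by the edge `(u,v)`. -/
def Δ (G : SimpleGraph V) (ψ : V → L) (u v : V) : Set (Quartet L) :=
  {q | Resolves G ψ u v q}

/-- The information content `I(T)`: all quartets resolved by some edge. -/
def infoContent (G : SimpleGraph V) (ψ : V → L) : Set (Quartet L) :=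
  {q | ∃ u v, Resolves G ψ u v q}

/-- The label set `M`: labels carried by the leaves. -/
def labelSet (G : SimpleGraph V) (ψ : V → L) : Set L :=
  {m | ∃ v, IsLeaf G v ∧ ψ v = m}

/-- Singly labeled: the labeling map is injective on leaves. -/
def SinglyLabeled (G : SimpleGraph V) (ψ : V → L) : Prop :=
  ∀ v w, IsLeaf G v → IsLeaf G w → ψ v = ψ w → v = w

/-- A MUL-tree: a finite unrooted tree (encoded as the nontrivial connected component
of `G`; vertices outside `G.support` are unused isolated vertices) together with a
labeling `ψ` of its leaves, such that every internal (non-leaf) node has degree ≥ 3.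
The label set `M` is `labelSet G ψ`, onto which `ψ` (restricted to leaves) is
automatically surjective. -/
structure MulTree (V L : Type) : Type where
  G : SimpleGraph V
  ψ : V → L
  fin : Finite V
  acyclic : G.IsAcyclic
  conn : ∀ u ∈ G.support, ∀ v ∈ G.support, G.Reachable u v
  internal3 : ∀ v ∈ G.support, ¬ IsLeaf G v → 3 ≤ deg G v

/-- `y` lies on the (unique) path between `a` and `b`: `a,b` are connected and
every walk from `a` to `b` passes through `y`. -/
def OnPath (G : SimpleGraph V) (y a b : V) : Prop :=
  G.Reachable a b ∧ ∀ p : G.Walk a b, y ∈ p.support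

/-- The edges `(u,v)` and `(w,x)` lie, in this order, on the path
`P_{u,x} = (u, v, …, w, x)` (possibly `v = w`). -/
def PathConfig (G : SimpleGraph V) (u v w x : V) : Prop :=
  G.Adj u v ∧ G.Adj w x ∧ OnPath G v u x ∧ OnPath G w v x

/-- An internal edge: both endpoints are internal (non-leaf) nodes. -/
def InternalEdge (G : SimpleGraph V) (a b : V) : Prop :=
  G.Adj a b ∧ ¬ IsLeaf G a ∧ ¬ IsLeaf G b

/-- Contracting the edge `(a,b)`: identify `b` with `a` (the vertex `b` becomes
an unused isolated vertex). -/
def contractEdge (G : SimpleGraph V) (a b : V) : SimpleGraph V where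
  Adj x y := x ≠ y ∧ x ≠ b ∧ y ≠ b ∧
    (G.Adj x y ∨ (x = a ∧ G.Adj b y) ∨ (y = a ∧ G.Adj x b))
  symm := by
    constructor
    rintro x y ⟨h1, h2, h3, h4 | ⟨hx, hy⟩ | ⟨hy, hx⟩⟩
    · exact ⟨h1.symm, h3, h2, Or.inl h4.symm⟩
    · exact ⟨h1.symm, h3, h2, Or.inr (Or.inr ⟨hx, hy.symm⟩)⟩
    · exact ⟨h1.symm, h3, h2, Or.inr (Or.inl ⟨hy, hx.symm⟩)⟩
  loopless := ⟨fun x h => h.1 rfl⟩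

/-- `PruneSpec G v₀ G'` : `G'` is the result of pruning the leaf `v₀` from `G`:
delete `v₀` (i.e. its unique edge); if as a result the neighbor `u` of `v₀`
becomes a degree-two node, additionally delete `u` and connect its former two
other neighbors by an edge. Deleted vertices become unused isolated vertices. -/
def PruneSpec (G : SimpleGraph V) (v₀ : V) (G' : SimpleGraph V) : Prop :=
  ∃ u, G.neighborSet v₀ = {u} ∧
    ((deg G u ≠ 3 ∧ G' = G.deleteEdges {s(u, v₀)}) ∨
     (deg G u = 3 ∧ ∃ p q, p ≠ q ∧ p ≠ v₀ ∧ q ≠ v₀ ∧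
        G.neighborSet u = {v₀, p, q} ∧
        G' = G.deleteEdges {s(u, v₀), s(u, p), s(u, q)} ⊔ fromEdgeSet {s(p, q)}))

/-- A leaf is prunable if pruning it leaves the information content unchanged. -/
def Prunable (G : SimpleGraph V) (ψ : V → L) (v₀ : V) : Prop :=
  IsLeaf G v₀ ∧ ∃ G', PruneSpec G v₀ G' ∧ infoContent G' ψ = infoContent G ψ

/-- An internal edge is contractible if contracting it leaves the information
content unchanged. -/
def Contractible (G : SimpleGraph V) (ψ : V → L) (a b : V) : Prop :=
  InternalEdge G a b ∧ infoContent (contractEdge G a b) ψ = infoContent G ψ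

/-- Maximally reduced: no prunable leaf and no contractible internal edge. -/
def MaximallyReduced (G : SimpleGraph V) (ψ : V → L) : Prop :=
  (∀ v, ¬ Prunable G ψ v) ∧ (∀ a b, ¬ Contractible G ψ a b)

/-- One reduction step: prune a prunable leaf or contract a contractible
internal edge. -/
def ReduceStep (ψ : V → L) (G G' : SimpleGraph V) : Prop :=
  (∃ v₀, Prunable G ψ v₀ ∧ PruneSpec G v₀ G') ∨
  (∃ a b, Contractible G ψ a b ∧ G' = contractEdge G a b)

/-- `H` is a maximally reduced form (MRF) of `G`: obtained from `G` by repeatedly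
pruning prunable leaves and contracting contractible internal edges, until
neither operation is possible. -/
def IsMRF (ψ : V → L) (G H : SimpleGraph V) : Prop :=
  Relation.ReflTransGen (ReduceStep ψ) G H ∧ MaximallyReduced H ψ

/-- Label-preserving isomorphism of (leaf-labeled) trees: a graph isomorphism
between the supports mapping leaves to leaves and preserving leaf labels. -/
def LIso (G : SimpleGraph V) (ψ : V → L) (G' : SimpleGraph V') (ψ' : V' → L) : Prop :=
  ∃ f : G.support ≃ G'.support,
    (∀ x y : G.support, G'.Adj (f x).1 (f y).1 ↔ G.Adj x.1 y.1) ∧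
    (∀ x : G.support, IsLeaf G x.1 → IsLeaf G' (f x).1 ∧ ψ' (f x).1 = ψ x.1)

/-- The set of internal edges of `G`, as unordered pairs. -/
def internalEdgeSet (G : SimpleGraph V) : Set (Sym2 V) :=
  {e | ∃ a b, e = s(a, b) ∧ InternalEdge G a b}

/-- The subtree `T_z^{yz}` branches out from the path `P_{u,x}` :
`y` is an interior vertex of the path and `z` is off the path. -/
def BranchesOut (G : SimpleGraph V) (u x y z : V) : Prop :=
  G.Adj y z ∧ OnPath G y u x ∧ y ≠ u ∧ y ≠ x ∧ ¬ OnPath G z u x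

/-- Vertices of the minimal subtree spanning all leaves labeled `ℓ`. -/
def spanVerts (G : SimpleGraph V) (ψ : V → L) (ℓ : L) : Set V :=
  {p | ∃ c d, IsLeaf G c ∧ IsLeaf G d ∧ ψ c = ℓ ∧ ψ d = ℓ ∧ OnPath G p c d}

/-- Degree of `y` within the subtree induced on the vertex set `S`. -/
noncomputable def degIn (G : SimpleGraph V) (S : Set V) (y : V) : ℕ :=
  (G.neighborSet y ∩ S).ncard

/-- One step of deleting a leaf labeled `ℓ` (by pruning, with suppression). -/
def PruneLabelStep (ψ : V → L) (ℓ : L) (G G' : SimpleGraph V) : Prop :=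
  ∃ v₀, IsLeaf G v₀ ∧ ψ v₀ = ℓ ∧ PruneSpec G v₀ G'

section AuxStmt18
variable {V L : Type}


lemma isolated_eq {K : SimpleGraph V} {v w : V} (hv : K.neighborSet v = ∅)
    (h : K.Reachable w v) : w = v := by
  obtain ⟨p⟩ := h.symm
  cases p with
  | nil => rfl
  | cons ha _ => exact absurd ha (by intro h'; have : _ ∈ K.neighborSet v := h'; simp [hv] at this)

lemma reach_congr {G H : SimpleGraph V} (h : ∀ a b, G.Adj a b → H.Reachable a b)
    {w z : V} (hr : G.Reachable w z) : H.Reachable w z := by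
  obtain ⟨p⟩ := hr
  induction p with
  | nil => exact Reachable.refl _
  | cons ha _ ih => exact (h _ _ ha).trans ih

lemma path_avoid_pendant {K : SimpleGraph V} {v₁ u : V} (hN : K.neighborSet v₁ ⊆ {u}) :
    ∀ {w z : V} (p : K.Walk w z), p.IsPath → w ≠ v₁ → z ≠ v₁ → v₁ ∉ p.support := by
  intro w z p
  induction p with
  | nil =>
    intro _ hw _ h
    simp only [SimpleGraph.Walk.support_nil, List.mem_singleton] at h
    exact hw h.symm
  | @cons w x z h p' ih =>
    intro hp hw hz hmem
    simp only [SimpleGraph.Walk.support_cons, List.mem_cons] at hmem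
    rcases hmem with h1 | h1
    · exact hw h1.symm
    by_cases hx : x = v₁
    · subst hx
      cases p' with
      | nil => exact hz rfl
      | @cons _ x' _ h2 p'' =>
        have hx' : x' = u := hN h2
        have hwu : w = u := hN h.symm
        have : w ∈ p''.support := by rw [hwu, ← hx']; exact p''.start_mem_support
        have hnd := hp.support_nodup
        simp only [SimpleGraph.Walk.support_cons, List.nodup_cons] at hnd
        exact hnd.1 (by simp [this])
    · exact ih hp.of_cons hx hz h1

lemma path_avoid_deg3 {K : SimpleGraph V} {u v₁ v₂ t : V}
    (hN : K.neighborSet u ⊆ {v₁, v₂, t}) :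
    ∀ {w z : V} (p : K.Walk w z), p.IsPath → w ≠ u → z ≠ u →
      v₁ ∉ p.support → v₂ ∉ p.support → u ∉ p.support := by
  intro w z p
  induction p with
  | nil =>
    intro _ hw _ _ _ h
    simp only [SimpleGraph.Walk.support_nil, List.mem_singleton] at h
    exact hw (h.symm ▸ rfl)
  | @cons w x z h p' ih =>
    intro hp hw hz hv1 hv2 hmem
    simp only [SimpleGraph.Walk.support_cons, List.mem_cons] at hmem hv1 hv2
    push_neg at hv1 hv2
    rcases hmem with h1 | h1
    · exact hw h1.symm
    by_cases hx : x = u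
    · subst hx
      cases p' with
      | nil => exact hz rfl
      | @cons _ x' _ h2 p'' =>
        have hx' : x' ∈ ({v₁, v₂, t} : Set V) := hN h2
        have hwmem : w ∈ ({v₁, v₂, t} : Set V) := hN h.symm
        have hwt : w = t := by
          rcases hwmem with h3 | h3 | h3
          · exact absurd h3 (by intro hh; exact hv1.1 hh.symm)
          · exact absurd h3 (by intro hh; exact hv2.1 hh.symm)
          · exact h3
        have hx'sup : x' ∈ (SimpleGraph.Walk.cons h2 p'').support := by
          simp [SimpleGraph.Walk.support_cons]
        rcases hx' with h3 | h3 | h3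
        · exact hv1.2 (h3 ▸ hx'sup)
        · exact hv2.2 (h3 ▸ hx'sup)
        · -- x' = t = w, contradiction with nodup
          have : w ∈ p''.support := by rw [hwt, ← h3]; exact p''.start_mem_support
          have hnd := hp.support_nodup
          simp only [SimpleGraph.Walk.support_cons, List.nodup_cons] at hnd
          exact hnd.1 (by simp [this])
    · exact ih hp.of_cons hx hz hv1.2 hv2.2 h1
-- lemmas about side / sideLabels / Resolves


lemma pendant_sideLabels {K : SimpleGraph V} {ψ : V → L} {v z : V}
    (hN : K.neighborSet v ⊆ {z}) : sideLabels K ψ v z ⊆ {ψ v} := by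
  rintro m ⟨w, _, hside, rfl⟩
  have hiso : (K.deleteEdges {s(v, z)}).neighborSet v = ∅ := by
    ext y
    simp only [mem_neighborSet, deleteEdges_adj, Set.mem_singleton_iff, Set.mem_empty_iff_false,
      iff_false, not_and, not_not]
    intro hy
    have : y = z := hN hy
    subst this; rfl
  have := isolated_eq hiso hside
  subst this; rfl

lemma not_resolves_of_subsingleton {K : SimpleGraph V} {ψ : V → L} {x y : V} {q : Quartet L}
    (h : (sideLabels K ψ x y).Subsingleton ∨ (sideLabels K ψ y x).Subsingleton) :
    ¬ Resolves K ψ x y q := by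
  rintro ⟨-, a, b, c, d, hab, hcd, ha, hb, hc, hd, -⟩
  rcases h with h | h
  · exact hab (h ha.1 hb.1)
  · exact hcd (h hc.1 hd.1)

lemma resolves_congr {K K' : SimpleGraph V} {ψ : V → L} {x y : V} {q : Quartet L}
    (hadj : K.Adj x y ↔ K'.Adj x y)
    (h1 : sideLabels K ψ x y = sideLabels K' ψ x y)
    (h2 : sideLabels K ψ y x = sideLabels K' ψ y x) :
    Resolves K ψ x y q ↔ Resolves K' ψ x y q := by
  unfold Resolves Mside
  rw [h1, h2, hadj]




lemma caseA_info (hfin : Finite V) (G : SimpleGraph V) (ψ : V → L) (v₁ v₂ u : V)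
    (hne : v₁ ≠ v₂) (hlab : ψ v₁ = ψ v₂)
    (hN₁ : G.neighborSet v₁ = {u}) (hN₂ : G.neighborSet v₂ = {u})
    (hdeg : 4 ≤ deg G u) :
    infoContent (G.deleteEdges {s(u, v₁)}) ψ = infoContent G ψ := by
  haveI := hfin
  classical
  have hadj1 : G.Adj v₁ u := by
    have : u ∈ G.neighborSet v₁ := by rw [hN₁]; rfl
    exact this
  have hadj2 : G.Adj v₂ u := by
    have : u ∈ G.neighborSet v₂ := by rw [hN₂]; rfl
    exact this
  have hv1u : v₁ ≠ u := hadj1.ne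
  have hv2u : v₂ ≠ u := hadj2.ne
  set G' := G.deleteEdges {s(u, v₁)} with hG'
  have hadjG' : ∀ a b : V, G'.Adj a b ↔ G.Adj a b ∧ s(a, b) ≠ s(u, v₁) := by
    intro a b
    rw [hG', deleteEdges_adj, Set.mem_singleton_iff]
  -- neighbor sets in G'
  have hN₁' : G'.neighborSet v₁ = ∅ := by
    ext y
    simp only [mem_neighborSet, hadjG', Set.mem_empty_iff_false, iff_false, not_and, not_not]
    intro hy
    have hyu : y = u := by
      have h' : y ∈ G.neighborSet v₁ := hy
      rw [hN₁] at h'; exact h'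
    subst hyu
    exact Sym2.eq_swap
  have hNv₂' : G'.neighborSet v₂ = {u} := by
    ext y
    simp only [mem_neighborSet, hadjG', Set.mem_singleton_iff]
    constructor
    · rintro ⟨hy, -⟩
      have h' : y ∈ G.neighborSet v₂ := hy
      rw [hN₂] at h'; exact h'
    · rintro rfl
      refine ⟨hadj2, fun hcon => ?_⟩
      rw [Sym2.eq_iff] at hcon
      rcases hcon with ⟨h1, h2⟩ | ⟨h1, h2⟩
      · exact hv2u h1
      · exact hne h1.symm
  have hNu' : G'.neighborSet u = G.neighborSet u \ {v₁} := by
    ext y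
    simp only [mem_neighborSet, hadjG', Set.mem_diff, Set.mem_singleton_iff]
    constructor
    · rintro ⟨h1, h2⟩; exact ⟨h1, fun hc => h2 (by rw [hc])⟩
    · rintro ⟨h1, h2⟩; exact ⟨h1, fun hc => h2 (Sym2.congr_right.mp hc)⟩
  have hNw' : ∀ w, w ≠ u → w ≠ v₁ → G'.neighborSet w = G.neighborSet w := by
    intro w hwu hwv
    ext y
    simp only [mem_neighborSet, hadjG']
    constructor
    · exact fun h => h.1
    · intro h
      refine ⟨h, fun hcon => ?_⟩
      rw [Sym2.eq_iff] at hcon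
      rcases hcon with ⟨h1, h2⟩ | ⟨h1, h2⟩
      · exact hwu h1
      · exact hwv h1
  have hdegu' : deg G' u = deg G u - 1 := by
    rw [deg, hNu', Set.ncard_diff_singleton_of_mem (show v₁ ∈ G.neighborSet u from hadj1.symm)]
    rfl
  have leaf_iff : ∀ w, w ≠ v₁ → (IsLeaf G' w ↔ IsLeaf G w) := by
    intro w hwv
    by_cases hwu : w = u
    · subst hwu
      unfold IsLeaf
      constructor <;> intro h <;> exfalso
      · rw [show deg G' w = deg G w - 1 from hdegu'] at h; omega
      · omega
    · unfold IsLeaf deg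
      rw [hNw' w hwu hwv]
  have leafv₁' : ¬ IsLeaf G' v₁ := by
    unfold IsLeaf deg
    rw [hN₁']
    simp
  have leafv₂' : IsLeaf G' v₂ := by
    unfold IsLeaf deg
    rw [hNv₂']
    exact Set.ncard_singleton u
  -- generic edge: sideLabels agree
  have key : ∀ x y : V, G.Adj x y → s(x, y) ≠ s(u, v₁) → s(x, y) ≠ s(u, v₂) →
      sideLabels G ψ x y = sideLabels G' ψ x y := by
    intro x y hxy e1 e2
    have hxv1 : x ≠ v₁ := by
      intro hx
      have h' : y ∈ G.neighborSet v₁ := hx ▸ hxy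
      rw [hN₁] at h'
      exact e1 (by rw [hx, h']; exact Sym2.eq_swap)
    have hyv1 : y ≠ v₁ := by
      intro hy
      have h' : x ∈ G.neighborSet v₁ := hy ▸ hxy.symm
      rw [hN₁] at h'
      exact e1 (by rw [hy, h'])
    have mono : ∀ a b : V, (G'.deleteEdges {s(x, y)}).Adj a b →
        (G.deleteEdges {s(x, y)}).Adj a b := by
      intro a b hab
      rw [deleteEdges_adj] at hab ⊢
      exact ⟨((hadjG' a b).mp hab.1).1, hab.2⟩
    have to' : ∀ w, w ≠ v₁ → w ∈ side G x y → w ∈ side G' x y := by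
      intro w hw hside
      obtain ⟨p0⟩ := hside
      obtain ⟨p, hp⟩ := p0.toPath
      have hsub : (G.deleteEdges {s(x, y)}).neighborSet v₁ ⊆ {u} := by
        intro z hz
        have h' : z ∈ G.neighborSet v₁ := (deleteEdges_adj.mp hz).1
        rw [hN₁] at h'; exact h'
      have hv1 : v₁ ∉ p.support := path_avoid_pendant hsub p hp hw hxv1
      refine ⟨p.transfer (G'.deleteEdges {s(x, y)}) ?_⟩
      intro e he
      have heH := p.edges_subset_edgeSet he
      rw [edgeSet_deleteEdges] at heH
      rw [hG', edgeSet_deleteEdges, edgeSet_deleteEdges]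
      refine ⟨⟨heH.1, ?_⟩, heH.2⟩
      intro hcon
      rw [Set.mem_singleton_iff] at hcon
      rw [hcon] at he
      exact hv1 (p.snd_mem_support_of_mem_edges he)
    have from' : ∀ w, w ∈ side G' x y → w ∈ side G x y := by
      intro w h
      exact reach_congr (fun a b hab => (mono a b hab).reachable) h
    have hA1 : (G.deleteEdges {s(x, y)}).Adj v₁ u := by
      rw [deleteEdges_adj, Set.mem_singleton_iff]
      exact ⟨hadj1, fun hcon => e1 (by rw [← hcon, Sym2.eq_swap])⟩
    have hA2 : (G.deleteEdges {s(x, y)}).Adj v₂ u := by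
      rw [deleteEdges_adj, Set.mem_singleton_iff]
      exact ⟨hadj2, fun hcon => e2 (by rw [← hcon, Sym2.eq_swap])⟩
    ext m
    constructor
    · rintro ⟨w, hwleaf, hwside, rfl⟩
      by_cases hwv : w = v₁
      · subst hwv
        refine ⟨v₂, leafv₂', ?_, hlab.symm⟩
        have h2 : v₂ ∈ side G x y := hA2.reachable.trans (hA1.reachable.symm.trans hwside)
        exact to' v₂ hne.symm h2
      · exact ⟨w, (leaf_iff w hwv).mpr hwleaf, to' w hwv hwside, rfl⟩
    · rintro ⟨w, hwleaf, hwside, rfl⟩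
      have hwv : w ≠ v₁ := fun h => leafv₁' (h ▸ hwleaf)
      exact ⟨w, (leaf_iff w hwv).mp hwleaf, from' w hwside, rfl⟩
  -- pendant subsets
  have hsub₁ : G.neighborSet v₁ ⊆ {u} := by rw [hN₁]
  have hsub₂ : G.neighborSet v₂ ⊆ {u} := by rw [hN₂]
  have hsub₂' : G'.neighborSet v₂ ⊆ {u} := by rw [hNv₂']
  -- main equality
  ext q
  simp only [infoContent, Set.mem_setOf_eq]
  constructor
  · rintro ⟨x, y, hres⟩
    have hadj' : G'.Adj x y := hres.1
    obtain ⟨hadj, he1⟩ := (hadjG' x y).mp hadj'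
    by_cases he2 : s(x, y) = s(u, v₂)
    · exfalso
      rw [Sym2.eq_iff] at he2
      rcases he2 with ⟨rfl, rfl⟩ | ⟨rfl, rfl⟩
      · exact not_resolves_of_subsingleton
          (Or.inr (Set.subsingleton_of_subset_singleton (pendant_sideLabels hsub₂'))) hres
      · exact not_resolves_of_subsingleton
          (Or.inl (Set.subsingleton_of_subset_singleton (pendant_sideLabels hsub₂'))) hres
    · refine ⟨x, y, (resolves_congr ⟨fun _ => hadj', fun _ => hadj⟩
        (key x y hadj he1 he2) (key y x hadj.symm ?_ ?_)).mpr hres⟩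
      · rw [Sym2.eq_swap]; exact he1
      · rw [Sym2.eq_swap]; exact he2
  · rintro ⟨x, y, hres⟩
    have hadj : G.Adj x y := hres.1
    by_cases he1 : s(x, y) = s(u, v₁)
    · exfalso
      rw [Sym2.eq_iff] at he1
      rcases he1 with ⟨rfl, rfl⟩ | ⟨rfl, rfl⟩
      · exact not_resolves_of_subsingleton
          (Or.inr (Set.subsingleton_of_subset_singleton (pendant_sideLabels hsub₁))) hres
      · exact not_resolves_of_subsingleton
          (Or.inl (Set.subsingleton_of_subset_singleton (pendant_sideLabels hsub₁))) hres
    by_cases he2 : s(x, y) = s(u, v₂)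
    · exfalso
      rw [Sym2.eq_iff] at he2
      rcases he2 with ⟨rfl, rfl⟩ | ⟨rfl, rfl⟩
      · exact not_resolves_of_subsingleton
          (Or.inr (Set.subsingleton_of_subset_singleton (pendant_sideLabels hsub₂))) hres
      · exact not_resolves_of_subsingleton
          (Or.inl (Set.subsingleton_of_subset_singleton (pendant_sideLabels hsub₂))) hres
    · have hadj' : G'.Adj x y := (hadjG' x y).mpr ⟨hadj, he1⟩
      refine ⟨x, y, (resolves_congr ⟨fun _ => hadj', fun _ => hadj⟩
        (key x y hadj he1 he2) (key y x hadj.symm ?_ ?_)).mp hres⟩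
      · rw [Sym2.eq_swap]; exact he1
      · rw [Sym2.eq_swap]; exact he2



lemma caseB_info (hfin : Finite V) (G : SimpleGraph V) (ψ : V → L) (v₁ v₂ u t : V)
    (hne : v₁ ≠ v₂) (ht1 : t ≠ v₁) (ht2 : t ≠ v₂)
    (hlab : ψ v₁ = ψ v₂)
    (hN₁ : G.neighborSet v₁ = {u}) (hN₂ : G.neighborSet v₂ = {u})
    (hNu : G.neighborSet u = {v₁, v₂, t}) :
    infoContent (G.deleteEdges {s(u, v₁), s(u, v₂), s(u, t)} ⊔ fromEdgeSet {s(v₂, t)}) ψ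
      = infoContent G ψ := by
  haveI := hfin
  classical
  have hadj1 : G.Adj v₁ u := by
    have : u ∈ G.neighborSet v₁ := by rw [hN₁]; rfl
    exact this
  have hadj2 : G.Adj v₂ u := by
    have : u ∈ G.neighborSet v₂ := by rw [hN₂]; rfl
    exact this
  have hadjt : G.Adj u t := by
    have : t ∈ G.neighborSet u := by rw [hNu]; simp
    exact this
  have hv1u : v₁ ≠ u := hadj1.ne
  have hv2u : v₂ ≠ u := hadj2.ne
  have htu : t ≠ u := hadjt.ne'
  have hAdj1 : ∀ y, G.Adj v₁ y ↔ y = u := by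
    intro y
    constructor
    · intro h
      have : y ∈ G.neighborSet v₁ := h
      rwa [hN₁] at this
    · rintro rfl; exact hadj1
  have hAdj2 : ∀ y, G.Adj v₂ y ↔ y = u := by
    intro y
    constructor
    · intro h
      have : y ∈ G.neighborSet v₂ := h
      rwa [hN₂] at this
    · rintro rfl; exact hadj2
  have hAdju : ∀ y, G.Adj u y ↔ (y = v₁ ∨ y = v₂ ∨ y = t) := by
    intro y
    constructor
    · intro h
      have : y ∈ G.neighborSet u := h
      rwa [hNu] at this
    · rintro (rfl | rfl | rfl)
      · exact hadj1.symm
      · exact hadj2.symm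
      · exact hadjt
  set S : Set (Sym2 V) := {s(u, v₁), s(u, v₂), s(u, t)} with hS
  set G' := G.deleteEdges S ⊔ fromEdgeSet {s(v₂, t)} with hG'
  have hadjG' : ∀ a b : V, G'.Adj a b ↔
      ((G.Adj a b ∧ s(a, b) ∉ S) ∨ (s(a, b) = s(v₂, t) ∧ a ≠ b)) := by
    intro a b
    rw [hG', sup_adj, deleteEdges_adj, fromEdgeSet_adj, Set.mem_singleton_iff]
  have memS : ∀ a b : V, s(a, b) ∈ S ↔
      (((a = u ∧ b = v₁) ∨ (a = v₁ ∧ b = u)) ∨ ((a = u ∧ b = v₂) ∨ (a = v₂ ∧ b = u)) ∨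
       ((a = u ∧ b = t) ∨ (a = t ∧ b = u))) := by
    intro a b
    rw [hS]
    simp only [Set.mem_insert_iff, Set.mem_singleton_iff, Sym2.eq_iff]
  have notS : ∀ a b : V, a ≠ u → b ≠ u → s(a, b) ∉ S := by
    intro a b ha hb h
    rw [memS] at h
    rcases h with (⟨h1, -⟩ | ⟨-, h2⟩) | (⟨h1, -⟩ | ⟨-, h2⟩) | (⟨h1, -⟩ | ⟨-, h2⟩)
    · exact ha h1
    · exact hb h2
    · exact ha h1
    · exact hb h2
    · exact ha h1
    · exact hb h2
  -- neighbor sets in G'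
  have hN₁' : G'.neighborSet v₁ = ∅ := by
    rw [Set.eq_empty_iff_forall_notMem]
    intro y hy
    rcases (hadjG' v₁ y).mp hy with ⟨hGa, hnS⟩ | ⟨heq, -⟩
    · apply hnS
      rw [memS]
      exact Or.inl (Or.inr ⟨rfl, (hAdj1 y).mp hGa⟩)
    · rw [Sym2.eq_iff] at heq
      rcases heq with ⟨h1, -⟩ | ⟨h1, -⟩
      · exact hne h1
      · exact ht1 h1.symm
  have hNu' : G'.neighborSet u = ∅ := by
    rw [Set.eq_empty_iff_forall_notMem]
    intro y hy
    rcases (hadjG' u y).mp hy with ⟨hGa, hnS⟩ | ⟨heq, -⟩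
    · apply hnS
      rw [memS]
      rcases (hAdju y).mp hGa with rfl | rfl | rfl
      · exact Or.inl (Or.inl ⟨rfl, rfl⟩)
      · exact Or.inr (Or.inl (Or.inl ⟨rfl, rfl⟩))
      · exact Or.inr (Or.inr (Or.inl ⟨rfl, rfl⟩))
    · rw [Sym2.eq_iff] at heq
      rcases heq with ⟨h1, -⟩ | ⟨h1, -⟩
      · exact hv2u h1.symm
      · exact htu h1.symm
  have hN₂' : G'.neighborSet v₂ = {t} := by
    ext y
    simp only [mem_neighborSet, hadjG', Set.mem_singleton_iff]
    constructor
    · rintro (⟨hy, hnot⟩ | ⟨heq, -⟩)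
      · exfalso
        have hyu : y = u := (hAdj2 y).mp hy
        apply hnot
        rw [memS, hyu]
        tauto
      · exact Sym2.congr_right.mp heq
    · rintro rfl
      exact Or.inr ⟨rfl, fun h => ht2 h.symm⟩
  have hNt' : G'.neighborSet t = insert v₂ (G.neighborSet t \ {u}) := by
    ext y
    simp only [mem_neighborSet, hadjG', Set.mem_insert_iff, Set.mem_diff,
      Set.mem_singleton_iff]
    constructor
    · rintro (⟨hy, hnot⟩ | ⟨heq, -⟩)
      · refine Or.inr ⟨hy, fun hyu => ?_⟩
        apply hnot
        rw [memS, hyu]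
        tauto
      · left
        rw [Sym2.eq_iff] at heq
        rcases heq with ⟨h1, -⟩ | ⟨-, h2⟩
        · exact absurd h1 ht2
        · exact h2
    · rintro (rfl | ⟨hy, hyu⟩)
      · exact Or.inr ⟨Sym2.eq_swap, ht2⟩
      · refine Or.inl ⟨hy, fun hmem => ?_⟩
        rw [memS] at hmem
        rcases hmem with (⟨h1, -⟩ | ⟨h1, -⟩) | (⟨h1, -⟩ | ⟨h1, -⟩) | (⟨h1, h2⟩ | ⟨-, h2⟩)
        · exact htu h1
        · exact ht1 h1
        · exact htu h1
        · exact ht2 h1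
        · exact htu h1
        · exact hyu h2
  have hNw' : ∀ w, w ≠ u → w ≠ v₁ → w ≠ v₂ → w ≠ t →
      G'.neighborSet w = G.neighborSet w := by
    intro w hwu hw1 hw2 hwt
    ext y
    simp only [mem_neighborSet, hadjG']
    constructor
    · rintro (⟨hy, -⟩ | ⟨heq, -⟩)
      · exact hy
      · exfalso
        rw [Sym2.eq_iff] at heq
        rcases heq with ⟨h1, -⟩ | ⟨h1, -⟩
        · exact hw2 h1
        · exact hwt h1
    · intro hy
      refine Or.inl ⟨hy, fun hmem => ?_⟩
      rw [memS] at hmem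
      rcases hmem with (⟨h1, -⟩ | ⟨h1, -⟩) | (⟨h1, -⟩ | ⟨h1, -⟩) | (⟨h1, -⟩ | ⟨h1, -⟩)
      · exact hwu h1
      · exact hw1 h1
      · exact hwu h1
      · exact hw2 h1
      · exact hwu h1
      · exact hwt h1
  -- leaf facts
  have leafv₁G : IsLeaf G v₁ := by unfold IsLeaf deg; rw [hN₁]; exact Set.ncard_singleton u
  have leafv₂G : IsLeaf G v₂ := by unfold IsLeaf deg; rw [hN₂]; exact Set.ncard_singleton u
  have hu_notleafG : ¬ IsLeaf G u := by
    unfold IsLeaf deg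
    intro h
    have hsub : ({v₂, t} : Set V) ⊆ G.neighborSet u := by
      rw [hNu]
      intro z hz
      rcases hz with rfl | hz
      · exact Or.inr (Or.inl rfl)
      · exact Or.inr (Or.inr hz)
    have h2 : ({v₂, t} : Set V).ncard ≤ (G.neighborSet u).ncard :=
      Set.ncard_le_ncard hsub (Set.toFinite _)
    rw [Set.ncard_pair (fun h' => ht2 h'.symm)] at h2
    omega
  have leafv₁' : ¬ IsLeaf G' v₁ := by unfold IsLeaf deg; rw [hN₁']; simp
  have leafu' : ¬ IsLeaf G' u := by unfold IsLeaf deg; rw [hNu']; simp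
  have leafv₂' : IsLeaf G' v₂ := by unfold IsLeaf deg; rw [hN₂']; exact Set.ncard_singleton t
  have hdegt' : deg G' t = deg G t := by
    unfold deg
    rw [hNt']
    have hv2not : v₂ ∉ G.neighborSet t \ {u} := by
      rintro ⟨h1, -⟩
      exact htu ((hAdj2 t).mp h1.symm)
    have humem : u ∈ G.neighborSet t := hadjt.symm
    rw [Set.ncard_insert_of_notMem hv2not (Set.toFinite _),
      Set.ncard_diff_singleton_of_mem humem]
    have : 0 < (G.neighborSet t).ncard :=
      (Set.ncard_pos (Set.toFinite _)).mpr ⟨u, humem⟩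
    omega
  have leaf_iff : ∀ w, w ≠ u → w ≠ v₁ → (IsLeaf G' w ↔ IsLeaf G w) := by
    intro w hwu hw1
    by_cases hw2 : w = v₂
    · subst hw2; exact iff_of_true leafv₂' leafv₂G
    by_cases hwt : w = t
    · subst hwt; unfold IsLeaf; rw [hdegt']
    · unfold IsLeaf deg; rw [hNw' w hwu hw1 hw2 hwt]
  -- generic-edge sideLabels correspondence
  have key : ∀ x y : V, G.Adj x y → x ≠ u → y ≠ u →
      sideLabels G ψ x y = sideLabels G' ψ x y := by
    intro x y hxy hxu hyu
    have hxv1 : x ≠ v₁ := fun h => hyu ((hAdj1 y).mp (h ▸ hxy))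
    have hyv1 : y ≠ v₁ := fun h => hxu ((hAdj1 x).mp (h ▸ hxy.symm))
    have hxv2 : x ≠ v₂ := fun h => hyu ((hAdj2 y).mp (h ▸ hxy))
    have hyv2 : y ≠ v₂ := fun h => hxu ((hAdj2 x).mp (h ▸ hxy.symm))
    have hu_ne : ∀ a : V, s(a, u) ≠ s(x, y) := by
      intro a h
      rw [Sym2.eq_iff] at h
      rcases h with ⟨-, h2⟩ | ⟨-, h2⟩
      · exact hyu h2.symm
      · exact hxu h2.symm
    have h2t : s(v₂, t) ≠ s(x, y) := by
      intro h
      rw [Sym2.eq_iff] at h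
      rcases h with ⟨h1, -⟩ | ⟨h1, -⟩
      · exact hxv2 h1.symm
      · exact hyv2 h1.symm
    have hHA1 : (G.deleteEdges {s(x, y)}).Adj v₁ u := by
      rw [deleteEdges_adj, Set.mem_singleton_iff]
      exact ⟨hadj1, hu_ne v₁⟩
    have hHA2 : (G.deleteEdges {s(x, y)}).Adj v₂ u := by
      rw [deleteEdges_adj, Set.mem_singleton_iff]
      exact ⟨hadj2, hu_ne v₂⟩
    have hHAt : (G.deleteEdges {s(x, y)}).Adj u t := by
      rw [deleteEdges_adj, Set.mem_singleton_iff]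
      refine ⟨hadjt, fun h => hu_ne t (by rw [Sym2.eq_swap]; exact h)⟩
    have hH'A : (G'.deleteEdges {s(x, y)}).Adj v₂ t := by
      rw [deleteEdges_adj, Set.mem_singleton_iff]
      exact ⟨(hadjG' v₂ t).mpr (Or.inr ⟨rfl, fun h => ht2 h.symm⟩), h2t⟩
    have to' : ∀ w, w ≠ u → w ≠ v₁ → w ≠ v₂ → w ∈ side G x y → w ∈ side G' x y := by
      intro w hwu hw1 hw2 hside
      obtain ⟨p0⟩ := hside
      obtain ⟨p, hp⟩ := p0.toPath
      have hsub1 : (G.deleteEdges {s(x, y)}).neighborSet v₁ ⊆ {u} := by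
        intro z hz
        have : z ∈ G.neighborSet v₁ := (deleteEdges_adj.mp hz).1
        rwa [hN₁] at this
      have hsub2 : (G.deleteEdges {s(x, y)}).neighborSet v₂ ⊆ {u} := by
        intro z hz
        have : z ∈ G.neighborSet v₂ := (deleteEdges_adj.mp hz).1
        rwa [hN₂] at this
      have hsubu : (G.deleteEdges {s(x, y)}).neighborSet u ⊆ {v₁, v₂, t} := by
        intro z hz
        have : z ∈ G.neighborSet u := (deleteEdges_adj.mp hz).1
        rwa [hNu] at this
      have m1 : v₁ ∉ p.support := path_avoid_pendant hsub1 p hp hw1 hxv1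
      have m2 : v₂ ∉ p.support := path_avoid_pendant hsub2 p hp hw2 hxv2
      have mu : u ∉ p.support := path_avoid_deg3 hsubu p hp hwu hxu m1 m2
      refine ⟨p.transfer (G'.deleteEdges {s(x, y)}) ?_⟩
      intro e he
      revert he
      refine Sym2.ind (fun a b he => ?_) e
      rw [mem_edgeSet, deleteEdges_adj, Set.mem_singleton_iff]
      have hab := p.adj_of_mem_edges he
      rw [deleteEdges_adj, Set.mem_singleton_iff] at hab
      have hau : a ≠ u := fun h => mu (h ▸ p.fst_mem_support_of_mem_edges he)
      have hbu : b ≠ u := fun h => mu (h ▸ p.snd_mem_support_of_mem_edges he)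
      exact ⟨(hadjG' a b).mpr (Or.inl ⟨hab.1, notS a b hau hbu⟩), hab.2⟩
    have from' : ∀ w, w ≠ v₂ → w ∈ side G' x y → w ∈ side G x y := by
      intro w hw2 hside
      obtain ⟨p0⟩ := hside
      obtain ⟨p, hp⟩ := p0.toPath
      have hsub2' : (G'.deleteEdges {s(x, y)}).neighborSet v₂ ⊆ {t} := by
        intro z hz
        have : z ∈ G'.neighborSet v₂ := (deleteEdges_adj.mp hz).1
        rwa [hN₂'] at this
      have m2 : v₂ ∉ p.support := path_avoid_pendant hsub2' p hp hw2 hxv2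
      refine ⟨p.transfer (G.deleteEdges {s(x, y)}) ?_⟩
      intro e he
      revert he
      refine Sym2.ind (fun a b he => ?_) e
      rw [mem_edgeSet, deleteEdges_adj, Set.mem_singleton_iff]
      have hab := p.adj_of_mem_edges he
      rw [deleteEdges_adj, Set.mem_singleton_iff] at hab
      rcases (hadjG' a b).mp hab.1 with ⟨hGa, -⟩ | ⟨heq, -⟩
      · exact ⟨hGa, hab.2⟩
      · exfalso
        rw [Sym2.eq_iff] at heq
        rcases heq with ⟨h1, -⟩ | ⟨-, h2⟩
        · exact m2 (h1 ▸ p.fst_mem_support_of_mem_edges he)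
        · exact m2 (h2 ▸ p.snd_mem_support_of_mem_edges he)
    ext m
    constructor
    · rintro ⟨w, hwleaf, hwside, rfl⟩
      have hwu : w ≠ u := fun h => hu_notleafG (h ▸ hwleaf)
      by_cases hw12 : w = v₁ ∨ w = v₂
      · have hureach : u ∈ side G x y := by
          rcases hw12 with rfl | rfl
          · exact hHA1.reachable.symm.trans hwside
          · exact hHA2.reachable.symm.trans hwside
        have htreach : t ∈ side G x y := hHAt.reachable.symm.trans hureach
        have htreach' : t ∈ side G' x y := to' t htu ht1 ht2 htreach
        have hv2' : v₂ ∈ side G' x y := hH'A.reachable.trans htreach'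
        refine ⟨v₂, leafv₂', hv2', ?_⟩
        rcases hw12 with rfl | rfl
        · exact hlab.symm
        · rfl
      · push_neg at hw12
        exact ⟨w, (leaf_iff w hwu hw12.1).mpr hwleaf,
          to' w hwu hw12.1 hw12.2 hwside, rfl⟩
    · rintro ⟨w, hwleaf, hwside, rfl⟩
      have hwu : w ≠ u := fun h => leafu' (h ▸ hwleaf)
      have hw1 : w ≠ v₁ := fun h => leafv₁' (h ▸ hwleaf)
      by_cases hw2 : w = v₂
      · have htreach' : t ∈ side G' x y := by
          rw [← hw2] at hH'A
          exact hH'A.reachable.symm.trans hwside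
        have htreach : t ∈ side G x y := from' t ht2 htreach'
        have hv2 : v₂ ∈ side G x y :=
          hHA2.reachable.trans (hHAt.reachable.trans htreach)
        exact ⟨v₂, leafv₂G, hv2, by rw [hw2]⟩
      · exact ⟨w, (leaf_iff w hwu hw1).mp hwleaf, from' w hw2 hwside, rfl⟩
  -- the (u,t) edge of G resolves nothing
  have ut_kill : (sideLabels G ψ u t).Subsingleton := by
    refine Set.subsingleton_of_subset_singleton (s := sideLabels G ψ u t) (a := ψ v₂) ?_
    rintro m ⟨w, hwleaf, hwside, rfl⟩
    have hwu : w ≠ u := fun h => hu_notleafG (h ▸ hwleaf)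
    by_cases hw1 : w = v₁
    · rw [Set.mem_singleton_iff, hw1]; exact hlab
    by_cases hw2 : w = v₂
    · rw [Set.mem_singleton_iff, hw2]
    exfalso
    obtain ⟨q0⟩ := hwside.symm
    obtain ⟨q, hq⟩ := q0.toPath
    have hsub1 : (G.deleteEdges {s(u, t)}).neighborSet v₁ ⊆ {u} := by
      intro z hz
      have : z ∈ G.neighborSet v₁ := (deleteEdges_adj.mp hz).1
      rwa [hN₁] at this
    have hsub2 : (G.deleteEdges {s(u, t)}).neighborSet v₂ ⊆ {u} := by
      intro z hz
      have : z ∈ G.neighborSet v₂ := (deleteEdges_adj.mp hz).1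
      rwa [hN₂] at this
    have m1 : v₁ ∉ q.support := path_avoid_pendant hsub1 q hq (fun h => hv1u h.symm) hw1
    have m2 : v₂ ∉ q.support := path_avoid_pendant hsub2 q hq (fun h => hv2u h.symm) hw2
    cases q with
    | nil => exact hwu rfl
    | @cons _ x' _ h q' =>
      have hx' : x' ∈ G.neighborSet u := (deleteEdges_adj.mp h).1
      have hx'ne : s(u, x') ∉ ({s(u, t)} : Set (Sym2 V)) := (deleteEdges_adj.mp h).2
      rw [Set.mem_singleton_iff] at hx'ne
      have hx't : x' ≠ t := fun hh => hx'ne (by rw [hh])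
      rw [hNu] at hx'
      have hx'sup : x' ∈ (SimpleGraph.Walk.cons h q').support := by
        simp [SimpleGraph.Walk.support_cons]
      rcases hx' with rfl | rfl | rfl
      · exact m1 hx'sup
      · exact m2 hx'sup
      · exact hx't rfl
  -- pendant subsets
  have hsub₁ : G.neighborSet v₁ ⊆ {u} := by rw [hN₁]
  have hsub₂ : G.neighborSet v₂ ⊆ {u} := by rw [hN₂]
  have hsub₂' : G'.neighborSet v₂ ⊆ {t} := by rw [hN₂']
  -- main equality
  ext q
  simp only [infoContent, Set.mem_setOf_eq]
  constructor
  · rintro ⟨x, y, hres⟩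
    have hadj' : G'.Adj x y := hres.1
    rcases (hadjG' x y).mp hadj' with ⟨hadj, hnS⟩ | ⟨heq, -⟩
    · have hxu : x ≠ u := by
        rintro rfl
        apply hnS
        rw [memS]
        rcases (hAdju y).mp hadj with rfl | rfl | rfl
        · exact Or.inl (Or.inl ⟨rfl, rfl⟩)
        · exact Or.inr (Or.inl (Or.inl ⟨rfl, rfl⟩))
        · exact Or.inr (Or.inr (Or.inl ⟨rfl, rfl⟩))
      have hyu : y ≠ u := by
        rintro rfl
        apply hnS
        rw [memS]
        rcases (hAdju x).mp hadj.symm with rfl | rfl | rfl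
        · exact Or.inl (Or.inr ⟨rfl, rfl⟩)
        · exact Or.inr (Or.inl (Or.inr ⟨rfl, rfl⟩))
        · exact Or.inr (Or.inr (Or.inr ⟨rfl, rfl⟩))
      exact ⟨x, y, (resolves_congr ⟨fun _ => hadj', fun _ => hadj⟩
        (key x y hadj hxu hyu) (key y x hadj.symm hyu hxu)).mpr hres⟩
    · exfalso
      rw [Sym2.eq_iff] at heq
      rcases heq with ⟨rfl, rfl⟩ | ⟨rfl, rfl⟩
      · exact not_resolves_of_subsingleton
          (Or.inl (Set.subsingleton_of_subset_singleton (pendant_sideLabels hsub₂'))) hres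
      · exact not_resolves_of_subsingleton
          (Or.inr (Set.subsingleton_of_subset_singleton (pendant_sideLabels hsub₂'))) hres
  · rintro ⟨x, y, hres⟩
    have hadj : G.Adj x y := hres.1
    by_cases hxu : x = u
    · exfalso
      subst hxu
      rcases (hAdju y).mp hadj with rfl | rfl | rfl
      · exact not_resolves_of_subsingleton
          (Or.inr (Set.subsingleton_of_subset_singleton (pendant_sideLabels hsub₁))) hres
      · exact not_resolves_of_subsingleton
          (Or.inr (Set.subsingleton_of_subset_singleton (pendant_sideLabels hsub₂))) hres
      · exact not_resolves_of_subsingleton (Or.inl ut_kill) hres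
    by_cases hyu : y = u
    · exfalso
      subst hyu
      rcases (hAdju x).mp hadj.symm with rfl | rfl | rfl
      · exact not_resolves_of_subsingleton
          (Or.inl (Set.subsingleton_of_subset_singleton (pendant_sideLabels hsub₁))) hres
      · exact not_resolves_of_subsingleton
          (Or.inl (Set.subsingleton_of_subset_singleton (pendant_sideLabels hsub₂))) hres
      · exact not_resolves_of_subsingleton (Or.inr ut_kill) hres
    · have hadj' : G'.Adj x y := (hadjG' x y).mpr (Or.inl ⟨hadj, notS x y hxu hyu⟩)
      exact ⟨x, y, (resolves_congr ⟨fun _ => hadj', fun _ => hadj⟩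
        (key x y hadj hxu hyu) (key y x hadj.symm hyu hxu)).mp hres⟩

end AuxStmt18

/-- If two distinct leaves carry the same label and have a common
neighbor (the same pendant node), then deleting one of them yields a tree with
the same information content; in particular each such leaf is prunable. -/
theorem stmt18 (T : MulTree V L) (v₁ v₂ u : V)
    (h₁ : IsLeaf T.G v₁) (h₂ : IsLeaf T.G v₂) (hne : v₁ ≠ v₂)
    (hlab : T.ψ v₁ = T.ψ v₂) (ha₁ : T.G.Adj u v₁) (ha₂ : T.G.Adj u v₂) :
    (∀ G', PruneSpec T.G v₁ G' → infoContent G' T.ψ = infoContent T.G T.ψ) ∧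
    Prunable T.G T.ψ v₁ := by
  haveI := T.fin
  classical
  have hN₁ : T.G.neighborSet v₁ = {u} := by
    obtain ⟨a, ha⟩ := Set.ncard_eq_one.mp h₁
    have hu : u ∈ T.G.neighborSet v₁ := ha₁.symm
    rw [ha] at hu
    rw [ha, Set.mem_singleton_iff.mp hu]
  have hN₂ : T.G.neighborSet v₂ = {u} := by
    obtain ⟨a, ha⟩ := Set.ncard_eq_one.mp h₂
    have hu : u ∈ T.G.neighborSet v₂ := ha₂.symm
    rw [ha] at hu
    rw [ha, Set.mem_singleton_iff.mp hu]
  have hu_nl : ¬ IsLeaf T.G u := by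
    intro h
    have hsub : ({v₁, v₂} : Set V) ⊆ T.G.neighborSet u := by
      intro z hz
      rcases hz with rfl | hz
      · exact ha₁
      · rw [Set.mem_singleton_iff] at hz
        subst hz
        exact ha₂
    have h2 := Set.ncard_le_ncard hsub (Set.toFinite _)
    rw [Set.ncard_pair hne] at h2
    unfold IsLeaf deg at h
    omega
  have hdeg3 : 3 ≤ deg T.G u := T.internal3 u ⟨v₁, ha₁⟩ hu_nl
  have part1 : ∀ G', PruneSpec T.G v₁ G' →
      infoContent G' T.ψ = infoContent T.G T.ψ := by
    rintro G' ⟨u', hNu', hcase⟩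
    have huu : u = u' := Set.singleton_eq_singleton_iff.mp (hN₁.symm.trans hNu')
    subst huu
    rcases hcase with ⟨hd3, rfl⟩ | ⟨hd3, p, qq, hpq, hpv, hqv, hNu, rfl⟩
    · have hdeg4 : 4 ≤ deg T.G u := by omega
      exact caseA_info T.fin T.G T.ψ v₁ v₂ u hne hlab hN₁ hN₂ hdeg4
    · have hv2mem : v₂ ∈ ({v₁, p, qq} : Set V) := by
        rw [← hNu]
        exact ha₂
      rcases hv2mem with h | h | h
    -- v₂ = v₁ impossible
      · exact absurd h.symm hne
      · -- v₂ = p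
        subst h
        exact caseB_info T.fin T.G T.ψ v₁ v₂ u qq hne hqv (Ne.symm hpq) hlab hN₁ hN₂ hNu
      · -- v₂ = qq
        rw [Set.mem_singleton_iff] at h
        subst h
        rw [Set.pair_comm p v₂] at hNu
        have e1 : ({s(u, v₁), s(u, p), s(u, v₂)} : Set (Sym2 V)) =
            {s(u, v₁), s(u, v₂), s(u, p)} := by
          rw [Set.pair_comm (s(u, p)) (s(u, v₂))]
        have e2 : s(p, v₂) = s(v₂, p) := Sym2.eq_swap
        rw [e1, e2]
        exact caseB_info T.fin T.G T.ψ v₁ v₂ u p hne hpv hpq hlab hN₁ hN₂ hNu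
  refine ⟨part1, h₁, ?_⟩
  by_cases hd3 : deg T.G u = 3
  · obtain ⟨a, b, c, hab, hac, hbc, habc⟩ := Set.ncard_eq_three.mp hd3
    have hv1mem : v₁ ∈ ({a, b, c} : Set V) := by
      rw [← habc]
      exact ha₁
    rcases hv1mem with h | h | h
    · subst h
      refine ⟨_, ⟨u, hN₁, Or.inr ⟨hd3, b, c, hbc, Ne.symm hab, Ne.symm hac, habc, rfl⟩⟩, ?_⟩
      exact part1 _ ⟨u, hN₁, Or.inr ⟨hd3, b, c, hbc, Ne.symm hab, Ne.symm hac, habc, rfl⟩⟩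
    · subst h
      rw [Set.insert_comm a v₁ {c}] at habc
      refine ⟨_, ⟨u, hN₁, Or.inr ⟨hd3, a, c, hac, hab, Ne.symm hbc, habc, rfl⟩⟩, ?_⟩
      exact part1 _ ⟨u, hN₁, Or.inr ⟨hd3, a, c, hac, hab, Ne.symm hbc, habc, rfl⟩⟩
    · rw [Set.mem_singleton_iff] at h
      subst h
      rw [Set.pair_comm b v₁, Set.insert_comm a v₁ {b}] at habc
      refine ⟨_, ⟨u, hN₁, Or.inr ⟨hd3, a, b, hab, hac, hbc, habc, rfl⟩⟩, ?_⟩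
      exact part1 _ ⟨u, hN₁, Or.inr ⟨hd3, a, b, hab, hac, hbc, habc, rfl⟩⟩
  · exact ⟨_, ⟨u, hN₁, Or.inl ⟨hd3, rfl⟩⟩, part1 _ ⟨u, hN₁, Or.inl ⟨hd3, rfl⟩⟩⟩
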